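/- arXiv:2401.06111 — 3 statements merged into one kernel-verified Lean document; each statement's English description precedes it below -/
import Mathlib

section
/- Every integer indefinite binary quadratic form F(x,y) = Ax² + 2Bxy + Cy² with positive integer coefficients A, B, C can be obtained from a form f(x,y) = ax² + 2bxy - cy² (with a, b, c ∈ ℤ_{≥0} and a + 2b - c > 0) by applying a unimodular matrix G = [[x₁, x₂],[y₁, y₂]] ∈ GL(2,ℤ) whose entries satisfy x₁ ≥ y₁ ≥ 0 and x₂ ≥ y₂ ≥ 0. -/
private lemma stmt2_aux (n : ℕ) : ∀ A B C : ℤ, A + C ≤ n → 0 < A → 0 < B → 0 < C →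
    0 ≤ B ^ 2 - A * C →
    ∃ a b c x₁ x₂ y₁ y₂ : ℤ,
      0 ≤ a ∧ 0 ≤ b ∧ 0 ≤ c ∧ a + 2 * b - c > 0 ∧
      x₁ ≥ y₁ ∧ y₁ ≥ 0 ∧ x₂ ≥ y₂ ∧ y₂ ≥ 0 ∧
      (x₁ * y₂ - x₂ * y₁ = 1 ∨ x₁ * y₂ - x₂ * y₁ = -1) ∧
      ∀ x y : ℤ, A * x ^ 2 + 2 * B * x * y + C * y ^ 2 =
        a * (x₁ * x + x₂ * y) ^ 2 + 2 * b * (x₁ * x + x₂ * y) * (y₁ * x + y₂ * y)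
          - c * (y₁ * x + y₂ * y) ^ 2 := by
  induction n with
  | zero =>
    intro A B C hn hA hB hC hind
    exfalso
    have : ((0 : ℕ) : ℤ) = 0 := by norm_num
    omega
  | succ n ih =>
    intro A B C hn hA hB hC hind
    by_cases h2 : A + C ≤ 2 * B
    · -- terminal case
      by_cases hBA : A ≤ B
      · refine ⟨A, B - A, 2 * B - A - C, 1, 1, 0, 1, by omega, by omega, by omega, by omega,
          by omega, by omega, by omega, by omega, by norm_num, ?_⟩
        intro x y; ring
      · -- here B < A, so C ≤ B
        refine ⟨C, B - C, 2 * B - A - C, 1, 1, 1, 0, by omega, ?_, by omega, by omega,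
          by omega, by omega, by omega, by omega, by norm_num, ?_⟩
        · -- 0 ≤ B - C : since B < A and A + C ≤ 2B, C < B
          omega
        · intro x y; ring
      -- note: in the second branch C ≤ 2B - A < B since A > B
    · -- A + C > 2B : recurse
      by_cases hBA : A < B
      · -- T-step : F'(u,v) = A u² + 2(B-A) u v + (A + C - 2B) v²
        have hind' : 0 ≤ (B - A) ^ 2 - A * (A + C - 2 * B) := by nlinarith [hind]
        obtain ⟨a, b, c, x₁, x₂, y₁, y₂, h1, h2', h3, h4, h5, h6, h7, h8, h9, h10⟩ :=
          ih A (B - A) (A + C - 2 * B) (by omega) hA (by omega) (by omega) hind'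
        refine ⟨a, b, c, x₁, x₁ + x₂, y₁, y₁ + y₂, h1, h2', h3, h4, h5, h6, by omega,
          by omega, ?_, ?_⟩
        · rcases h9 with h | h
          · left; linear_combination h
          · right; linear_combination h
        · intro x y
          linear_combination h10 (x + y) y
      · -- here B ≤ A ; show C < B
        have hBC : C < B := by
          by_contra hcon
          push_neg at hcon
          nlinarith [mul_nonneg (by linarith : (0:ℤ) ≤ A - B) (by linarith : (0:ℤ) ≤ C - B),
            mul_pos hB (by linarith : (0:ℤ) < A + C - 2 * B)]
        -- S-step : F'(u,v) = (A + C - 2B) u² + 2(B-C) u v + C v²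
        have hind' : 0 ≤ (B - C) ^ 2 - (A + C - 2 * B) * C := by nlinarith [hind]
        obtain ⟨a, b, c, x₁, x₂, y₁, y₂, h1, h2', h3, h4, h5, h6, h7, h8, h9, h10⟩ :=
          ih (A + C - 2 * B) (B - C) C (by omega) (by omega) (by omega) hC hind'
        refine ⟨a, b, c, x₁ + x₂, x₂, y₁ + y₂, y₂, h1, h2', h3, h4, by omega, by omega,
          h7, h8, ?_, ?_⟩
        · rcases h9 with h | h
          · left; linear_combination h
          · right; linear_combination h
        · intro x y
          linear_combination h10 x (x + y)

/-- Every integer indefinite binary quadratic form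
`F(x,y) = A x² + 2 B x y + C y²` with positive integer coefficients can be
obtained from a form `f(x,y) = a x² + 2 b x y - c y²` (with `a,b,c ≥ 0` and
`a + 2b - c > 0`) by applying a unimodular matrix `G = [[x₁,x₂],[y₁,y₂]]`
with `x₁ ≥ y₁ ≥ 0` and `x₂ ≥ y₂ ≥ 0`, i.e. `F(x,y) = f(x₁x + x₂y, y₁x + y₂y)`. -/
theorem stmt_2 (A B C : ℤ) (hA : 0 < A) (hB : 0 < B) (hC : 0 < C)
    (hindef : 0 ≤ B ^ 2 - A * C) :
    ∃ a b c x₁ x₂ y₁ y₂ : ℤ,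
      0 ≤ a ∧ 0 ≤ b ∧ 0 ≤ c ∧ a + 2 * b - c > 0 ∧
      x₁ ≥ y₁ ∧ y₁ ≥ 0 ∧ x₂ ≥ y₂ ∧ y₂ ≥ 0 ∧
      (x₁ * y₂ - x₂ * y₁ = 1 ∨ x₁ * y₂ - x₂ * y₁ = -1) ∧
      ∀ x y : ℤ, A * x ^ 2 + 2 * B * x * y + C * y ^ 2 =
        a * (x₁ * x + x₂ * y) ^ 2 + 2 * b * (x₁ * x + x₂ * y) * (y₁ * x + y₂ * y)
          - c * (y₁ * x + y₂ * y) ^ 2 := by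
  exact stmt2_aux (A + C).toNat A B C (by omega) hA hB hC hindef
end

section
/- Let B ≥ 1 be an integer and C ≥ 0 an integer, and write C = sB - r with integers s ≥ 1 and 0 < r ≤ B. Let P = conv{(0,0),(1,0)} and Q = conv{(s,0),(1,0),(0,r),(0,B)}. Then Vol₂(P) = 0, Vol₂(Q) = C, and V(P,Q) = B. -/
open Pointwise MeasureTheory

/-- The embedding of `ℤ²` into `ℝ²`. -/
def toR2 (p : ℤ × ℤ) : ℝ × ℝ := ((p.1 : ℝ), (p.2 : ℝ))

/-- A lattice polygon: the convex hull of a non-empty finite set of points of `ℤ²`. -/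
def IsLatticePolygon (S : Set (ℝ × ℝ)) : Prop :=
  ∃ F : Finset (ℤ × ℤ), F.Nonempty ∧ S = convexHull ℝ (toR2 '' ↑F)

/-- The normalized volume: twice the Euclidean area. -/
noncomputable def nvol (S : Set (ℝ × ℝ)) : ℝ := 2 * (volume S).toReal

/-- The normalized mixed volume `V(P,Q) = (Vol₂(P+Q) - Vol₂(P) - Vol₂(Q))/2`. -/
noncomputable def mixedVol (P Q : Set (ℝ × ℝ)) : ℝ :=
  (nvol (P + Q) - nvol P - nvol Q) / 2


lemma line_null (a b c : ℝ) (h : a ≠ 0 ∨ b ≠ 0) :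
    volume {p : ℝ × ℝ | a * p.1 + b * p.2 = c} = 0 := by
  set f : ℝ × ℝ →ₗ[ℝ] ℝ :=
    a • LinearMap.fst ℝ ℝ ℝ + b • LinearMap.snd ℝ ℝ ℝ with hf
  obtain ⟨v, hv⟩ : ∃ v : ℝ × ℝ, a * v.1 + b * v.2 = c := by
    rcases h with h | h
    · exact ⟨(c / a, 0), by field_simp; ring⟩
    · exact ⟨(0, c / b), by field_simp; ring⟩
  have hker : (LinearMap.ker f : Submodule ℝ (ℝ × ℝ)) ≠ ⊤ := by
    intro ht
    rcases h with h | h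
    · have : (1, 0) ∈ LinearMap.ker f := ht ▸ Submodule.mem_top
      simp [hf, LinearMap.mem_ker] at this
      exact h this
    · have : ((0 : ℝ), (1 : ℝ)) ∈ LinearMap.ker f := ht ▸ Submodule.mem_top
      simp [hf, LinearMap.mem_ker] at this
      exact h this
  have hset : {p : ℝ × ℝ | a * p.1 + b * p.2 = c}
      = (fun p => p + (-v)) ⁻¹' (LinearMap.ker f : Set (ℝ × ℝ)) := by
    ext p
    simp only [Set.mem_setOf_eq, Set.mem_preimage, SetLike.mem_coe, LinearMap.mem_ker, hf,
      LinearMap.add_apply, LinearMap.smul_apply, LinearMap.fst_apply, LinearMap.snd_apply,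
      Prod.fst_add, Prod.snd_add, Prod.fst_neg, Prod.snd_neg, smul_eq_mul]
    constructor
    · intro hp; nlinarith [hv]
    · intro hp; nlinarith [hv]
  rw [hset, measure_preimage_add_right]
  exact Measure.addHaar_submodule volume (LinearMap.ker f) hker

noncomputable def T0 : Set (ℝ × ℝ) := convexHull ℝ {((0:ℝ),(0:ℝ)), (1,0), (0,1)}

lemma mem_triangle {a b c p : ℝ × ℝ} (α β γ : ℝ) (hα : 0 ≤ α) (hβ : 0 ≤ β) (hγ : 0 ≤ γ)
    (hsum : α + β + γ = 1) (hp : p = α • a + β • b + γ • c) :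
    p ∈ convexHull ℝ ({a, b, c} : Set (ℝ × ℝ)) := by
  have h := Finset.centerMass_mem_convexHull (Finset.univ : Finset (Fin 3))
    (w := ![α, β, γ]) (z := ![a, b, c]) (s := {a, b, c})
    (by intro i _; fin_cases i <;> simpa)
    (by simp [Fin.sum_univ_three, hsum])
    (by intro i _; fin_cases i <;> simp)
  rw [Finset.centerMass, Fin.sum_univ_three, Fin.sum_univ_three] at h
  simpa [hsum, ← hp] using h

lemma T0_eq : T0 = {p : ℝ × ℝ | 0 ≤ p.1 ∧ 0 ≤ p.2 ∧ p.1 + p.2 ≤ 1} := by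
  apply le_antisymm
  · apply convexHull_min
    · intro p hp
      simp only [Set.mem_insert_iff, Set.mem_singleton_iff] at hp
      rcases hp with rfl | rfl | rfl <;> norm_num
    · intro x hx y hy α β hα hβ hαβ
      obtain ⟨h1, h2, h3⟩ := hx
      obtain ⟨h4, h5, h6⟩ := hy
      refine ⟨?_, ?_, ?_⟩ <;>
        simp only [Prod.fst_add, Prod.snd_add, Prod.smul_fst, Prod.smul_snd, smul_eq_mul] <;>
        nlinarith
  · rintro ⟨x, y⟩ ⟨h1, h2, h3⟩
    exact mem_triangle (1 - x - y) x y (by linarith) h1 h2 (by ring)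
      (by simp only [Prod.smul_mk, smul_eq_mul, Prod.mk_add_mk, Prod.mk.injEq]
          constructor <;> ring)

lemma T1_eq : convexHull ℝ ({((1:ℝ),(1:ℝ)), (0,1), (1,0)} : Set (ℝ × ℝ))
    = {p : ℝ × ℝ | p.1 ≤ 1 ∧ p.2 ≤ 1 ∧ 1 ≤ p.1 + p.2} := by
  apply le_antisymm
  · apply convexHull_min
    · intro p hp
      simp only [Set.mem_insert_iff, Set.mem_singleton_iff] at hp
      rcases hp with rfl | rfl | rfl <;> norm_num
    · intro x hx y hy α β hα hβ hαβ
      obtain ⟨h1, h2, h3⟩ := hx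
      obtain ⟨h4, h5, h6⟩ := hy
      refine ⟨?_, ?_, ?_⟩ <;>
        simp only [Prod.fst_add, Prod.snd_add, Prod.smul_fst, Prod.smul_snd, smul_eq_mul] <;>
        nlinarith
  · rintro ⟨x, y⟩ ⟨h1, h2, h3⟩
    exact mem_triangle (x + y - 1) (1 - x) (1 - y)
      (by linarith) (by linarith) (by linarith) (by ring)
      (by simp only [Prod.smul_mk, smul_eq_mul, Prod.mk_add_mk, Prod.mk.injEq]
          constructor <;> ring)

lemma triangle_image (a u w : ℝ × ℝ) :
    convexHull ℝ ({a, a + u, a + w} : Set (ℝ × ℝ)) =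
      (fun p => a + (Matrix.toLin (Module.Basis.finTwoProd ℝ) (Module.Basis.finTwoProd ℝ)
        !![u.1, w.1; u.2, w.2]) p) '' T0 := by
  set M := Matrix.toLin (Module.Basis.finTwoProd ℝ) (Module.Basis.finTwoProd ℝ) !![u.1, w.1; u.2, w.2] with hM
  let g : (ℝ × ℝ) →ᵃ[ℝ] (ℝ × ℝ) :=
    ⟨fun p => a + M p, M, by intro v p; simp [map_add]; abel⟩
  have hg : (fun p => a + M p) = ⇑g := rfl
  rw [hg, T0, AffineMap.image_convexHull]
  congr 1
  have h1 : g (0, 0) = a := by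
    show a + M (0, 0) = a
    simp [hM, Matrix.toLin_finTwoProd_apply]
  have h2 : g (1, 0) = a + u := by
    show a + M (1, 0) = a + u
    simp [hM, Matrix.toLin_finTwoProd_apply]
  have h3 : g (0, 1) = a + w := by
    show a + M (0, 1) = a + w
    simp [hM, Matrix.toLin_finTwoProd_apply]
  rw [Set.image_insert_eq, Set.image_insert_eq, Set.image_singleton, h1, h2, h3]

lemma vol_triangle_aux (a u w : ℝ × ℝ) :
    volume (convexHull ℝ ({a, a + u, a + w} : Set (ℝ × ℝ)))
      = ENNReal.ofReal |u.1 * w.2 - u.2 * w.1| * volume T0 := by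
  rw [triangle_image]
  set M := Matrix.toLin (Module.Basis.finTwoProd ℝ) (Module.Basis.finTwoProd ℝ) !![u.1, w.1; u.2, w.2] with hM
  have himg : (fun p => a + M p) '' T0 = (fun x => -a + x) ⁻¹' (⇑M '' T0) := by
    ext x
    simp only [Set.mem_image, Set.mem_preimage]
    constructor
    · rintro ⟨p, hp, rfl⟩; exact ⟨p, hp, by abel⟩
    · rintro ⟨p, hp, hx⟩
      refine ⟨p, hp, ?_⟩
      have : x = a + M p := by rw [hx]; abel
      exact this.symm
  rw [himg, measure_preimage_add, Measure.addHaar_image_linearMap]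
  congr 2
  rw [hM, LinearMap.det_toLin, Matrix.det_fin_two_of]
  ring

lemma triangle_measurable (a b c : ℝ × ℝ) :
    MeasurableSet (convexHull ℝ ({a, b, c} : Set (ℝ × ℝ))) :=
  ((Set.toFinite _).isCompact_convexHull ℝ).isClosed.measurableSet

lemma T0_vol : volume T0 = ENNReal.ofReal (1 / 2) := by
  set T1 : Set (ℝ × ℝ) := convexHull ℝ ({((1:ℝ),(1:ℝ)), (0,1), (1,0)} : Set (ℝ × ℝ)) with hT1
  have hvol1 : volume T1 = volume T0 := by
    have e1 : ((0:ℝ),(1:ℝ)) = ((1:ℝ),(1:ℝ)) + (-1,0) := by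
      rw [Prod.mk_add_mk]; norm_num
    have e2 : ((1:ℝ),(0:ℝ)) = ((1:ℝ),(1:ℝ)) + (0,-1) := by
      rw [Prod.mk_add_mk]; norm_num
    rw [hT1, e1, e2, vol_triangle_aux]
    norm_num
  have hunion : T0 ∪ T1 = Set.Icc (0:ℝ) 1 ×ˢ Set.Icc (0:ℝ) 1 := by
    rw [T0_eq, hT1, T1_eq]
    ext ⟨x, y⟩
    simp only [Set.mem_union, Set.mem_setOf_eq, Set.mem_prod, Set.mem_Icc]
    constructor
    · rintro (⟨h1, h2, h3⟩ | ⟨h1, h2, h3⟩) <;> constructor <;> constructor <;> linarith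
    · rintro ⟨⟨h1, h2⟩, h3, h4⟩
      rcases le_total (x + y) 1 with h | h
      · exact Or.inl ⟨h1, h3, h⟩
      · exact Or.inr ⟨h2, h4, h⟩
  have hinter : volume (T0 ∩ T1) = 0 := by
    apply measure_mono_null (t := {p : ℝ × ℝ | 1 * p.1 + 1 * p.2 = 1})
    · rintro ⟨x, y⟩ ⟨hp0, hp1⟩
      rw [T0_eq] at hp0
      rw [hT1, T1_eq] at hp1
      simp only [Set.mem_setOf_eq] at hp0 hp1 ⊢
      simp only [one_mul]
      linarith [hp0.2.2, hp1.2.2]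
    · exact line_null 1 1 1 (Or.inl one_ne_zero)
  have hsq : volume (Set.Icc (0:ℝ) 1 ×ˢ Set.Icc (0:ℝ) 1) = 1 := by
    rw [Measure.volume_eq_prod, Measure.prod_prod, Real.volume_Icc]
    norm_num
  have key := measure_union_add_inter (μ := volume) T0
    (triangle_measurable ((1:ℝ),(1:ℝ)) (0,1) (1,0))
  rw [hunion, hsq, hinter, add_zero, hvol1] at key
  have hfin : volume T0 ≠ ⊤ := by
    rw [T0]
    exact ((Set.toFinite _).isCompact_convexHull ℝ).measure_lt_top.ne
  have h2 : (2 : ENNReal) * volume T0 = 1 := by rw [two_mul]; exact key.symm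
  have ht : (volume T0).toReal = 1 / 2 := by
    have h3 := congrArg ENNReal.toReal h2
    rw [ENNReal.toReal_mul] at h3
    simp only [ENNReal.toReal_ofNat, ENNReal.toReal_one] at h3
    linarith
  rw [← ENNReal.ofReal_toReal hfin, ht]

lemma lin2 (a b : ℝ) : IsLinearMap ℝ (fun p : ℝ × ℝ => a * p.1 + b * p.2) := by
  constructor
  · intro x y; simp; ring
  · intro c x; simp [smul_eq_mul]; ring

lemma tri_half_le {a b c : ℝ × ℝ} {u v t : ℝ}
    (h1 : u * a.1 + v * a.2 ≤ t) (h2 : u * b.1 + v * b.2 ≤ t) (h3 : u * c.1 + v * c.2 ≤ t) :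
    convexHull ℝ ({a, b, c} : Set (ℝ × ℝ)) ⊆ {p : ℝ × ℝ | u * p.1 + v * p.2 ≤ t} := by
  apply convexHull_min _ (convex_halfSpace_le (lin2 u v) t)
  intro p hp
  rcases hp with rfl | rfl | rfl <;> assumption

lemma tri_half_ge {a b c : ℝ × ℝ} {u v t : ℝ}
    (h1 : t ≤ u * a.1 + v * a.2) (h2 : t ≤ u * b.1 + v * b.2) (h3 : t ≤ u * c.1 + v * c.2) :
    convexHull ℝ ({a, b, c} : Set (ℝ × ℝ)) ⊆ {p : ℝ × ℝ | t ≤ u * p.1 + v * p.2} := by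
  apply convexHull_min _ (convex_halfSpace_ge (lin2 u v) t)
  intro p hp
  rcases hp with rfl | rfl | rfl <;> assumption

lemma vol_triangle (a b c : ℝ × ℝ) :
    volume (convexHull ℝ ({a, b, c} : Set (ℝ × ℝ)))
      = ENNReal.ofReal (|(b.1 - a.1) * (c.2 - a.2) - (b.2 - a.2) * (c.1 - a.1)| / 2) := by
  have e1 : b = a + (b - a) := by abel
  have e2 : c = a + (c - a) := by abel
  rw [show ({a, b, c} : Set (ℝ × ℝ)) = {a, a + (b - a), a + (c - a)} by rw [← e1, ← e2],
    vol_triangle_aux, T0_vol, ← ENNReal.ofReal_mul (abs_nonneg _)]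
  congr 1
  simp only [Prod.fst_sub, Prod.snd_sub]
  ring

lemma memT2 {b r x y : ℝ} (hb : 0 < b) (hr : 0 < r) (hrb : r ≤ b)
    (hx : 0 ≤ x) (hy : 0 ≤ y) (h1 : r ≤ r * x + y) (h2 : b * x + y ≤ b) :
    ((x, y) : ℝ × ℝ) ∈ convexHull ℝ ({((1:ℝ),(0:ℝ)), (0,b), (0,r)} : Set (ℝ × ℝ)) := by
  rcases eq_or_lt_of_le hrb with rfl | hlt
  · have hxy : r * x + y = r := le_antisymm h2 h1
    have hx1 : x ≤ 1 := by nlinarith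
    apply mem_triangle x (1 - x) 0 hx (by linarith) le_rfl (by ring)
    simp only [Prod.smul_mk, smul_eq_mul, Prod.mk_add_mk, Prod.mk.injEq]
    constructor <;> nlinarith
  · have hd : b - r ≠ 0 := by linarith
    apply mem_triangle x ((r * x + y - r) / (b - r)) ((b - b * x - y) / (b - r)) hx
      (div_nonneg (by linarith) (by linarith)) (div_nonneg (by linarith) (by linarith))
    · field_simp
      ring
    · simp only [Prod.smul_mk, smul_eq_mul, Prod.mk_add_mk, Prod.mk.injEq]
      constructor
      · ring
      · field_simp
        ring

lemma memT1Q {b s x y : ℝ} (hb : 0 < b) (hs : 1 ≤ s) (hx : 0 ≤ x) (hy : 0 ≤ y)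
    (h1 : b ≤ b * x + y) (h2 : b * x + s * y ≤ s * b) :
    ((x, y) : ℝ × ℝ) ∈ convexHull ℝ ({((1:ℝ),(0:ℝ)), (s,0), (0,b)} : Set (ℝ × ℝ)) := by
  rcases eq_or_lt_of_le hs with rfl | hs1
  · have hxy : b * x + y = b := le_antisymm (by linarith) h1
    have hx1 : x ≤ 1 := by nlinarith
    apply mem_triangle x 0 (1 - x) hx le_rfl (by linarith) (by ring)
    simp only [Prod.smul_mk, smul_eq_mul, Prod.mk_add_mk, Prod.mk.injEq]
    constructor <;> nlinarith
  · have hd0 : (0:ℝ) < b * (s - 1) := by nlinarith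
    have hd : b * (s - 1) ≠ 0 := ne_of_gt hd0
    have hb' : b ≠ 0 := ne_of_gt hb
    apply mem_triangle ((s * b - b * x - s * y) / (b * (s - 1)))
      ((b * x + y - b) / (b * (s - 1))) (y / b)
      (div_nonneg (by linarith) hd0.le) (div_nonneg (by linarith) hd0.le)
      (div_nonneg hy hb.le)
    · field_simp
      ring
    · simp only [Prod.smul_mk, smul_eq_mul, Prod.mk_add_mk, Prod.mk.injEq]
      constructor
      · field_simp
        ring
      · field_simp
        ring

lemma memT2' {b x y : ℝ} (hb : 0 < b) (hyb : y ≤ b) (h1 : b ≤ b * x + y) (hx1 : x ≤ 1) :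
    ((x, y) : ℝ × ℝ) ∈ convexHull ℝ ({((1:ℝ),(0:ℝ)), (1,b), (0,b)} : Set (ℝ × ℝ)) := by
  have hb' : b ≠ 0 := ne_of_gt hb
  have hβ : (0:ℝ) ≤ x - 1 + y / b := by
    have h : x - 1 + y / b = (b * x + y - b) / b := by field_simp; ring
    rw [h]
    exact div_nonneg (by linarith) hb.le
  apply mem_triangle (1 - y / b) (x - 1 + y / b) (1 - x)
    (by rw [sub_nonneg]; exact div_le_one_of_le₀ hyb hb.le) hβ (by linarith) (by ring)
  simp only [Prod.smul_mk, smul_eq_mul, Prod.mk_add_mk, Prod.mk.injEq]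
  constructor
  · ring
  · field_simp
    ring

lemma memT1' {b s x y : ℝ} (hb : 0 < b) (hs : 1 ≤ s) (hy : 0 ≤ y) (hx1 : 1 ≤ x)
    (h2 : b * x + s * y ≤ (s + 1) * b) :
    ((x, y) : ℝ × ℝ) ∈ convexHull ℝ ({((1:ℝ),(0:ℝ)), (s+1,0), (1,b)} : Set (ℝ × ℝ)) := by
  have hs0 : (0:ℝ) < s := by linarith
  have hs' : s ≠ 0 := ne_of_gt hs0
  have hb' : b ≠ 0 := ne_of_gt hb
  apply mem_triangle (1 - (x - 1) / s - y / b) ((x - 1) / s) (y / b)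
    (by have h3 : (x - 1) / s + y / b ≤ 1 := by
          rw [div_add_div _ _ hs' hb', div_le_one (by positivity)]
          nlinarith
        linarith)
    (div_nonneg (by linarith) hs0.le) (div_nonneg hy hb.le)
    (by ring)
  simp only [Prod.smul_mk, smul_eq_mul, Prod.mk_add_mk, Prod.mk.injEq]
  constructor
  · field_simp
    ring
  · field_simp
    ring

set_option maxHeartbeats 1000000 in
lemma Q_decomp {b s r : ℝ} (hb : 0 < b) (hs : 1 ≤ s) (hr : 0 < r) (hrb : r ≤ b) :
    convexHull ℝ ({((s:ℝ),(0:ℝ)), (1,0), (0,r), (0,b)} : Set (ℝ × ℝ))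
      = convexHull ℝ ({((1:ℝ),(0:ℝ)), (s,0), (0,b)} : Set (ℝ × ℝ))
        ∪ convexHull ℝ ({((1:ℝ),(0:ℝ)), (0,b), (0,r)} : Set (ℝ × ℝ)) := by
  apply le_antisymm
  · have hH : convexHull ℝ ({((s:ℝ),(0:ℝ)), (1,0), (0,r), (0,b)} : Set (ℝ × ℝ)) ⊆
        ({p : ℝ × ℝ | 0 ≤ 1 * p.1 + 0 * p.2} ∩ {p : ℝ × ℝ | 0 ≤ 0 * p.1 + 1 * p.2}
          ∩ {p : ℝ × ℝ | r ≤ r * p.1 + 1 * p.2} ∩ {p : ℝ × ℝ | b * p.1 + s * p.2 ≤ s * b}) := by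
      apply convexHull_min
      · intro p hp
        simp only [Set.mem_insert_iff, Set.mem_singleton_iff] at hp
        rcases hp with rfl | rfl | rfl | rfl <;>
          refine ⟨⟨⟨?_, ?_⟩, ?_⟩, ?_⟩ <;> simp only [Set.mem_setOf_eq] <;> nlinarith
      · exact (((convex_halfSpace_ge (lin2 1 0) 0).inter
          (convex_halfSpace_ge (lin2 0 1) 0)).inter
          (convex_halfSpace_ge (lin2 r 1) r)).inter
          (convex_halfSpace_le (lin2 b s) (s * b))
    intro p hp
    obtain ⟨x, y⟩ := p
    obtain ⟨⟨⟨h1, h2⟩, h3⟩, h4⟩ := hH hp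
    simp only [Set.mem_setOf_eq] at h1 h2 h3 h4
    have h1' : 0 ≤ x := by linarith
    have h2' : 0 ≤ y := by linarith
    have h3' : r ≤ r * x + y := by linarith
    rcases le_total (b * x + y) b with h | h
    · exact Or.inr (memT2 hb hr hrb h1' h2' h3' h)
    · exact Or.inl (memT1Q hb hs h1' h2' h h4)
  · apply Set.union_subset <;> apply convexHull_mono <;> intro p hp <;>
      simp only [Set.mem_insert_iff, Set.mem_singleton_iff] at hp ⊢ <;> tauto

set_option maxHeartbeats 1000000 in
lemma PQ_decomp {b s r : ℝ} (hb : 0 < b) (hs : 1 ≤ s) (hr : 0 < r) (hrb : r ≤ b) :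
    convexHull ℝ (({((0:ℝ),(0:ℝ)), (1,0)} : Set (ℝ × ℝ))
        + ({((s:ℝ),(0:ℝ)), (1,0), (0,r), (0,b)} : Set (ℝ × ℝ)))
      = convexHull ℝ ({((1:ℝ),(0:ℝ)), (s+1,0), (1,b)} : Set (ℝ × ℝ))
        ∪ convexHull ℝ ({((1:ℝ),(0:ℝ)), (1,b), (0,b)} : Set (ℝ × ℝ))
        ∪ convexHull ℝ ({((1:ℝ),(0:ℝ)), (0,b), (0,r)} : Set (ℝ × ℝ)) := by
  apply le_antisymm
  · have hH : convexHull ℝ (({((0:ℝ),(0:ℝ)), (1,0)} : Set (ℝ × ℝ))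
        + ({((s:ℝ),(0:ℝ)), (1,0), (0,r), (0,b)} : Set (ℝ × ℝ))) ⊆
        ({p : ℝ × ℝ | 0 ≤ 1 * p.1 + 0 * p.2} ∩ {p : ℝ × ℝ | 0 ≤ 0 * p.1 + 1 * p.2}
          ∩ {p : ℝ × ℝ | 0 * p.1 + 1 * p.2 ≤ b} ∩ {p : ℝ × ℝ | r ≤ r * p.1 + 1 * p.2}
          ∩ {p : ℝ × ℝ | b * p.1 + s * p.2 ≤ (s + 1) * b}) := by
      apply convexHull_min
      · intro p hp
        rw [Set.mem_add] at hp
        obtain ⟨u, hu, v, hv, rfl⟩ := hp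
        simp only [Set.mem_insert_iff, Set.mem_singleton_iff] at hu hv
        rcases hu with rfl | rfl <;> rcases hv with rfl | rfl | rfl | rfl <;>
          refine ⟨⟨⟨⟨?_, ?_⟩, ?_⟩, ?_⟩, ?_⟩ <;>
          simp only [Set.mem_setOf_eq, Prod.mk_add_mk] <;> nlinarith
      · exact ((((convex_halfSpace_ge (lin2 1 0) 0).inter
          (convex_halfSpace_ge (lin2 0 1) 0)).inter
          (convex_halfSpace_le (lin2 0 1) b)).inter
          (convex_halfSpace_ge (lin2 r 1) r)).inter
          (convex_halfSpace_le (lin2 b s) ((s + 1) * b))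
    intro p hp
    obtain ⟨x, y⟩ := p
    obtain ⟨⟨⟨⟨h1, h2⟩, h3⟩, h4⟩, h5⟩ := hH hp
    simp only [Set.mem_setOf_eq] at h1 h2 h3 h4 h5
    have h2' : 0 ≤ y := by linarith
    have h3' : y ≤ b := by linarith
    have h4' : r ≤ r * x + y := by linarith
    rcases le_total (b * x + y) b with h | h
    · exact Or.inr (memT2 hb hr hrb (by linarith) h2' h4' h)
    · rcases le_total x 1 with h' | h'
      · exact Or.inl (Or.inr (memT2' hb h3' h h'))
      · exact Or.inl (Or.inl (memT1' hb hs h2' h' h5))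
  · have key : ∀ u ∈ ({((0:ℝ),(0:ℝ)), (1,0)} : Set (ℝ × ℝ)),
        ∀ v ∈ ({((s:ℝ),(0:ℝ)), (1,0), (0,r), (0,b)} : Set (ℝ × ℝ)),
        u + v ∈ convexHull ℝ (({((0:ℝ),(0:ℝ)), (1,0)} : Set (ℝ × ℝ))
          + ({((s:ℝ),(0:ℝ)), (1,0), (0,r), (0,b)} : Set (ℝ × ℝ))) :=
      fun u hu v hv => subset_convexHull _ _ (Set.add_mem_add hu hv)
    have m1 := key (0,0) (by left; rfl) (1,0) (by right; left; rfl)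
    have m2 := key (1,0) (by right; rfl) (s,0) (by left; rfl)
    have m3 := key (1,0) (by right; rfl) (0,b) (by right; right; right; rfl)
    have m4 := key (0,0) (by left; rfl) (0,b) (by right; right; right; rfl)
    have m5 := key (0,0) (by left; rfl) (0,r) (by right; right; left; rfl)
    rw [Prod.mk_add_mk] at m1 m2 m3 m4 m5
    norm_num at m1 m2 m3 m4 m5
    rw [show (1 + s : ℝ) = s + 1 by ring] at m2
    refine Set.union_subset (Set.union_subset ?_ ?_) ?_ <;>
      refine convexHull_min ?_ (convex_convexHull ℝ _) <;> intro p hp <;>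
      simp only [Set.mem_insert_iff, Set.mem_singleton_iff] at hp
    · rcases hp with rfl | rfl | rfl
      exacts [m1, m2, m3]
    · rcases hp with rfl | rfl | rfl
      exacts [m1, m3, m4]
    · rcases hp with rfl | rfl | rfl
      exacts [m1, m4, m5]

lemma union_vol {A B : Set (ℝ × ℝ)} (hB : MeasurableSet B)
    {u v t : ℝ} (huv : u ≠ 0 ∨ v ≠ 0)
    (hA : A ⊆ {p : ℝ × ℝ | t ≤ u * p.1 + v * p.2}) (hB' : B ⊆ {p : ℝ × ℝ | u * p.1 + v * p.2 ≤ t}) :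
    volume (A ∪ B) = volume A + volume B := by
  have h := measure_union_add_inter (μ := volume) A hB
  have h0 : volume (A ∩ B) = 0 := by
    apply measure_mono_null (t := {p : ℝ × ℝ | u * p.1 + v * p.2 = t})
    · rintro p ⟨hpA, hpB⟩
      show u * p.1 + v * p.2 = t
      exact le_antisymm (hB' hpB) (hA hpA)
    · exact line_null u v t huv
  rw [h0, add_zero] at h
  exact h

lemma volT1 {b s : ℝ} (hb : 0 < b) (hs : 1 ≤ s) :
    volume (convexHull ℝ ({((1:ℝ),(0:ℝ)), (s,0), (0,b)} : Set (ℝ × ℝ)))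
      = ENNReal.ofReal ((s - 1) * b / 2) := by
  rw [vol_triangle]
  norm_num
  rw [abs_of_nonneg (by nlinarith), abs_of_nonneg hb.le]

lemma volT2 {b r : ℝ} (hr : 0 ≤ r) (hrb : r ≤ b) :
    volume (convexHull ℝ ({((1:ℝ),(0:ℝ)), (0,b), (0,r)} : Set (ℝ × ℝ)))
      = ENNReal.ofReal ((b - r) / 2) := by
  rw [vol_triangle]
  norm_num
  rw [show (-r + b : ℝ) = b - r by ring, abs_of_nonneg (by linarith)]

lemma volU1 {b s : ℝ} (hb : 0 ≤ b) (hs : 0 ≤ s) :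
    volume (convexHull ℝ ({((1:ℝ),(0:ℝ)), (s+1,0), (1,b)} : Set (ℝ × ℝ)))
      = ENNReal.ofReal (s * b / 2) := by
  rw [vol_triangle]
  norm_num
  rw [abs_of_nonneg (by positivity), abs_of_nonneg hb]

lemma volU2 {b : ℝ} (hb : 0 ≤ b) :
    volume (convexHull ℝ ({((1:ℝ),(0:ℝ)), (1,b), (0,b)} : Set (ℝ × ℝ)))
      = ENNReal.ofReal (b / 2) := by
  rw [vol_triangle]
  norm_num
  rw [abs_of_nonneg hb]

lemma volQ {b s r : ℝ} (hb : 0 < b) (hs : 1 ≤ s) (hr : 0 < r) (hrb : r ≤ b) :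
    volume (convexHull ℝ ({((s:ℝ),(0:ℝ)), (1,0), (0,r), (0,b)} : Set (ℝ × ℝ)))
      = ENNReal.ofReal ((s - 1) * b / 2) + ENNReal.ofReal ((b - r) / 2) := by
  rw [Q_decomp hb hs hr hrb]
  rw [union_vol (triangle_measurable _ _ _) (Or.inl (ne_of_gt hb))
    (tri_half_ge (u := b) (v := 1) (t := b) (by norm_num) (by simp; nlinarith) (by norm_num))
    (tri_half_le (u := b) (v := 1) (t := b) (by norm_num) (by norm_num) (by simp; linarith)),
    volT1 hb hs, volT2 hr.le hrb]

lemma volPQ {b s r : ℝ} (hb : 0 < b) (hs : 1 ≤ s) (hr : 0 < r) (hrb : r ≤ b) :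
    volume (convexHull ℝ (({((0:ℝ),(0:ℝ)), (1,0)} : Set (ℝ × ℝ))
        + ({((s:ℝ),(0:ℝ)), (1,0), (0,r), (0,b)} : Set (ℝ × ℝ))))
      = ENNReal.ofReal (s * b / 2) + ENNReal.ofReal (b / 2) + ENNReal.ofReal ((b - r) / 2) := by
  rw [PQ_decomp hb hs hr hrb]
  have hU1 : convexHull ℝ ({((1:ℝ),(0:ℝ)), (s+1,0), (1,b)} : Set (ℝ × ℝ))
      ⊆ {p : ℝ × ℝ | b ≤ b * p.1 + 1 * p.2} :=
    tri_half_ge (u := b) (v := 1) (t := b) (by norm_num) (by simp; nlinarith) (by simp; nlinarith)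
  have hU2 : convexHull ℝ ({((1:ℝ),(0:ℝ)), (1,b), (0,b)} : Set (ℝ × ℝ))
      ⊆ {p : ℝ × ℝ | b ≤ b * p.1 + 1 * p.2} :=
    tri_half_ge (u := b) (v := 1) (t := b) (by norm_num) (by simp; nlinarith) (by norm_num)
  have hT3 : convexHull ℝ ({((1:ℝ),(0:ℝ)), (0,b), (0,r)} : Set (ℝ × ℝ))
      ⊆ {p : ℝ × ℝ | b * p.1 + 1 * p.2 ≤ b} :=
    tri_half_le (u := b) (v := 1) (t := b) (by norm_num) (by norm_num) (by simp; linarith)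
  rw [union_vol (triangle_measurable _ _ _) (Or.inl (ne_of_gt hb))
    (Set.union_subset hU1 hU2) hT3]
  rw [union_vol (triangle_measurable _ _ _) (Or.inl (one_ne_zero))
    (tri_half_ge (u := 1) (v := 0) (t := 1) (by norm_num) (by simp; nlinarith) (by norm_num))
    (tri_half_le (u := 1) (v := 0) (t := 1) (by norm_num) (by norm_num) (by norm_num))]
  rw [volU1 hb.le (by linarith), volU2 hb.le, volT2 hr.le hrb]

/-- For integers `B ≥ 1`, `C ≥ 0` with `C = sB - r`, `s ≥ 1`,
`0 < r ≤ B`, the segment `P = conv{(0,0),(1,0)}` and the polygon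
`Q = conv{(s,0),(1,0),(0,r),(0,B)}` satisfy `Vol₂(P) = 0`, `Vol₂(Q) = C` and
`V(P,Q) = B`. -/
theorem stmt_10 (B C s r : ℤ) (hB : 1 ≤ B) (hC : 0 ≤ C) (hs : 1 ≤ s)
    (hr0 : 0 < r) (hrB : r ≤ B) (hsr : C = s * B - r)
    (P Q : Set (ℝ × ℝ))
    (hP : P = convexHull ℝ {((0 : ℝ), (0 : ℝ)), (1, 0)})
    (hQ : Q = convexHull ℝ {(((s : ℝ)), (0 : ℝ)), (1, 0), (0, (r : ℝ)), (0, (B : ℝ))}) :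
    nvol P = 0 ∧ nvol Q = C ∧ mixedVol P Q = B := by
  have hb : (0:ℝ) < (B:ℝ) := by exact_mod_cast lt_of_lt_of_le zero_lt_one hB
  have hs' : (1:ℝ) ≤ (s:ℝ) := by exact_mod_cast hs
  have hr' : (0:ℝ) < (r:ℝ) := by exact_mod_cast hr0
  have hrb' : (r:ℝ) ≤ (B:ℝ) := by exact_mod_cast hrB
  have hPnull : volume P = 0 := by
    apply measure_mono_null (t := {p : ℝ × ℝ | 0 * p.1 + 1 * p.2 = 0})
    · rw [hP]
      apply convexHull_min _ (convex_hyperplane (lin2 0 1) 0)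
      intro p hp
      rcases hp with rfl | rfl <;> norm_num
    · exact line_null 0 1 0 (Or.inr one_ne_zero)
  have hnvolP : nvol P = 0 := by rw [nvol, hPnull]; simp
  have hQvol : volume Q = ENNReal.ofReal (((s:ℝ) - 1) * (B:ℝ) / 2)
      + ENNReal.ofReal (((B:ℝ) - (r:ℝ)) / 2) := by
    rw [hQ]; exact volQ hb hs' hr' hrb'
  have hd1 : (0:ℝ) ≤ ((s:ℝ) - 1) * (B:ℝ) / 2 := by nlinarith
  have hd2 : (0:ℝ) ≤ ((B:ℝ) - (r:ℝ)) / 2 := by linarith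
  have hnvolQ : nvol Q = (C:ℝ) := by
    rw [nvol, hQvol, ENNReal.toReal_add ENNReal.ofReal_ne_top ENNReal.ofReal_ne_top,
      ENNReal.toReal_ofReal hd1, ENNReal.toReal_ofReal hd2]
    have : (C:ℝ) = (s:ℝ) * (B:ℝ) - (r:ℝ) := by exact_mod_cast congrArg (Int.cast : ℤ → ℝ) hsr
    rw [this]; ring
  have hPQvol : volume (P + Q) = ENNReal.ofReal ((s:ℝ) * (B:ℝ) / 2)
      + ENNReal.ofReal ((B:ℝ) / 2) + ENNReal.ofReal (((B:ℝ) - (r:ℝ)) / 2) := by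
    rw [hP, hQ, ← convexHull_add]
    exact volPQ hb hs' hr' hrb'
  have he1 : (0:ℝ) ≤ (s:ℝ) * (B:ℝ) / 2 := by nlinarith
  have he2 : (0:ℝ) ≤ (B:ℝ) / 2 := by linarith
  have hnvolPQ : nvol (P + Q) = (s:ℝ) * (B:ℝ) + 2 * (B:ℝ) - (r:ℝ) := by
    rw [nvol, hPQvol, ENNReal.toReal_add (by simp) ENNReal.ofReal_ne_top,
      ENNReal.toReal_add ENNReal.ofReal_ne_top ENNReal.ofReal_ne_top,
      ENNReal.toReal_ofReal he1, ENNReal.toReal_ofReal he2, ENNReal.toReal_ofReal hd2]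
    ring
  refine ⟨hnvolP, hnvolQ, ?_⟩
  rw [mixedVol, hnvolPQ, hnvolP, hnvolQ]
  have : (C:ℝ) = (s:ℝ) * (B:ℝ) - (r:ℝ) := by exact_mod_cast congrArg (Int.cast : ℤ → ℝ) hsr
  rw [this]; ring
end

section
/- For lattice polygons P, Q ⊂ ℝ², the Minkowski inequality holds for normalized volumes: Vol₂(P)·Vol₂(Q) ≤ V(P,Q)², where V(P,Q) = (Vol₂(P+Q) - Vol₂(P) - Vol₂(Q))/2. -/
open Pointwise MeasureTheory

open Set
open scoped ENNReal

lemma vol1d (s : Set ℝ) (hc : Convex ℝ s) (hne : s.Nonempty) (hb : Bornology.IsBounded s) :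
    volume s = ENNReal.ofReal (sSup s - sInf s) := by
  have hba : BddAbove s := hb.bddAbove
  have hbb : BddBelow s := hb.bddBelow
  have h1 : Ioo (sInf s) (sSup s) ⊆ s := by
    intro a ha
    obtain ⟨x, hx, hxa⟩ := exists_lt_of_csInf_lt hne ha.1
    obtain ⟨y, hy, hay⟩ := exists_lt_of_lt_csSup hne ha.2
    exact hc.ordConnected.out hx hy ⟨hxa.le, hay.le⟩
  have h2 : s ⊆ Icc (sInf s) (sSup s) := fun x hx => ⟨csInf_le hbb hx, le_csSup hba hx⟩
  refine le_antisymm ?_ ?_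
  · calc volume s ≤ volume (Icc (sInf s) (sSup s)) := measure_mono h2
      _ = ENNReal.ofReal (sSup s - sInf s) := Real.volume_Icc
  · calc ENNReal.ofReal (sSup s - sInf s) = volume (Ioo (sInf s) (sSup s)) := Real.volume_Ioo.symm
      _ ≤ volume s := measure_mono h1

lemma vol1d_add (s t : Set ℝ) (hcs : Convex ℝ s) (hnes : s.Nonempty) (hbs : Bornology.IsBounded s)
    (hct : Convex ℝ t) (hnet : t.Nonempty) (hbt : Bornology.IsBounded t) :
    volume s + volume t ≤ volume (s + t) := by
  rw [vol1d s hcs hnes hbs, vol1d t hct hnet hbt,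
    vol1d (s+t) (hcs.add hct) (hnes.add hnet) (hbs.add hbt),
    csSup_add hnes hbs.bddAbove hnet hbt.bddAbove,
    csInf_add hnes hbs.bddBelow hnet hbt.bddBelow, ← ENNReal.ofReal_add]
  · apply le_of_eq; ring_nf
  · obtain ⟨x, hx⟩ := hnes
    have := csInf_le hbs.bddBelow hx
    have := le_csSup hbs.bddAbove hx
    linarith
  · obtain ⟨x, hx⟩ := hnet
    have := csInf_le hbt.bddBelow hx
    have := le_csSup hbt.bddAbove hx
    linarith

lemma vol1d_smul (a : ℝ) (s : Set ℝ) (ha : 0 ≤ a) :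
    volume (a • s) = ENNReal.ofReal a * volume s := by
  rw [Measure.addHaar_smul]
  simp [abs_of_nonneg ha]

noncomputable def slicef (A : Set (ℝ×ℝ)) (x : ℝ) : ℝ := (volume (Prod.mk x ⁻¹' A)).toReal

section SliceFacts
variable {A : Set (ℝ×ℝ)} {r : ℝ}

lemma slice_subset (hAr : A ⊆ Metric.closedBall 0 r) (x : ℝ) : Prod.mk x ⁻¹' A ⊆ Icc (-r) r := by
  intro y hy
  have := hAr hy
  simp only [Metric.mem_closedBall, dist_zero_right, Prod.norm_def, Real.norm_eq_abs,
    sup_le_iff] at this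
  exact abs_le.mp this.2

lemma slice_vol_ne_top (hAr : A ⊆ Metric.closedBall 0 r) (x : ℝ) : volume (Prod.mk x ⁻¹' A) ≠ ⊤ := by
  refine ne_top_of_le_ne_top ?_ (measure_mono (slice_subset hAr x))
  simp [Real.volume_Icc]

lemma slice_bounded (hAr : A ⊆ Metric.closedBall 0 r) (x : ℝ) : Bornology.IsBounded (Prod.mk x ⁻¹' A) :=
  (Metric.isBounded_Icc (-r) r).subset (slice_subset hAr x)

lemma slicef_nonneg (x : ℝ) : 0 ≤ slicef A x := ENNReal.toReal_nonneg

lemma slicef_le (hAr : A ⊆ Metric.closedBall 0 r) (hr : 0 ≤ r) (x : ℝ) : slicef A x ≤ 2 * r := by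
  have h : volume (Prod.mk x ⁻¹' A) ≤ volume (Icc (-r) r) := measure_mono (slice_subset hAr x)
  rw [Real.volume_Icc] at h
  calc slicef A x ≤ (ENNReal.ofReal (r - -r)).toReal :=
        ENNReal.toReal_mono (by simp) h
    _ ≤ 2 * r := by
        rw [ENNReal.toReal_ofReal (by linarith)]; linarith

lemma slice_convex (hc : Convex ℝ A) (x : ℝ) : Convex ℝ (Prod.mk x ⁻¹' A) := by
  intro y1 hy1 y2 hy2 a b ha hb hab
  have := hc hy1 hy2 ha hb hab
  simpa [Prod.smul_mk, Prod.mk_add_mk, ← add_mul, hab] using this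

lemma slice_nonempty_of_pos {x : ℝ} (h : 0 < slicef A x) : (Prod.mk x ⁻¹' A).Nonempty := by
  rcases eq_empty_or_nonempty (Prod.mk x ⁻¹' A) with he | hne
  · exfalso; rw [slicef, he] at h; simp at h
  · exact hne

lemma ofReal_le_slice_vol (hAr : A ⊆ Metric.closedBall 0 r) {x : ℝ} {c : ℝ} (h : c ≤ slicef A x) :
    ENNReal.ofReal c ≤ volume (Prod.mk x ⁻¹' A) := by
  have := ENNReal.ofReal_le_ofReal h
  rwa [slicef, ENNReal.ofReal_toReal (slice_vol_ne_top hAr x)] at this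

lemma superlevel_convex (hAr : A ⊆ Metric.closedBall 0 r) (hc : Convex ℝ A) {c : ℝ} (hcpos : 0 < c) :
    Convex ℝ {x | c ≤ slicef A x} := by
  intro x1 h1 x2 h2 a b ha hb hab
  simp only [mem_setOf_eq] at h1 h2 ⊢
  set s1 := Prod.mk x1 ⁻¹' A with hs1
  set s2 := Prod.mk x2 ⁻¹' A with hs2
  have hne1 : s1.Nonempty := slice_nonempty_of_pos (lt_of_lt_of_le hcpos h1)
  have hne2 : s2.Nonempty := slice_nonempty_of_pos (lt_of_lt_of_le hcpos h2)
  have hincl : a • s1 + b • s2 ⊆ Prod.mk (a • x1 + b • x2) ⁻¹' A := by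
    rintro z ⟨z1, hz1, z2, hz2, rfl⟩
    obtain ⟨y1, hy1, rfl⟩ := hz1
    obtain ⟨y2, hy2, rfl⟩ := hz2
    have := hc hy1 hy2 ha hb hab
    simpa [Prod.smul_mk, Prod.mk_add_mk] using this
  have hvol : ENNReal.ofReal c ≤ volume (Prod.mk (a • x1 + b • x2) ⁻¹' A) := by
    calc ENNReal.ofReal c = ENNReal.ofReal a * ENNReal.ofReal c
          + ENNReal.ofReal b * ENNReal.ofReal c := by
          rw [← add_mul, ← ENNReal.ofReal_add ha hb, hab]; simp
      _ ≤ ENNReal.ofReal a * volume s1 + ENNReal.ofReal b * volume s2 := by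
          gcongr
          · exact ofReal_le_slice_vol hAr h1
          · exact ofReal_le_slice_vol hAr h2
      _ = volume (a • s1) + volume (b • s2) := by
          rw [vol1d_smul a s1 ha, vol1d_smul b s2 hb]
      _ ≤ volume (a • s1 + b • s2) :=
          vol1d_add _ _ ((slice_convex hc x1).smul a) (hne1.smul_set)
            ((slice_bounded hAr x1).smul₀ a) ((slice_convex hc x2).smul b) (hne2.smul_set)
            ((slice_bounded hAr x2).smul₀ b)
      _ ≤ volume (Prod.mk (a • x1 + b • x2) ⁻¹' A) := measure_mono hincl
  calc c = (ENNReal.ofReal c).toReal := by rw [ENNReal.toReal_ofReal hcpos.le]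
    _ ≤ slicef A (a • x1 + b • x2) :=
        ENNReal.toReal_mono (slice_vol_ne_top hAr _) hvol

end SliceFacts

section LayerCake

lemma superlevel_antimeas (f : ℝ → ℝ) {a : ℝ} (ha : 0 ≤ a) :
    Measurable fun s : ℝ => volume {x | a * s ≤ f x} := by
  apply Antitone.measurable
  intro s t hst
  exact measure_mono (fun x hx => le_trans (mul_le_mul_of_nonneg_left hst ha) hx)

-- substitution
lemma subst_lemma (φ : ℝ → ℝ≥0∞) (hφ : Measurable φ) {a : ℝ} (L : ℝ) (ha : 0 < a) :
    ∫⁻ s in Ioo 0 L, φ (a * s) = ENNReal.ofReal a⁻¹ * ∫⁻ u in Ioo 0 (a * L), φ u := by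
  have hpre : (a * ·) ⁻¹' (Ioo 0 (a * L)) = Ioo 0 L := by
    ext s
    simp only [mem_preimage, mem_Ioo]
    constructor
    · rintro ⟨h1, h2⟩
      have hs : 0 < s := by by_contra h; push_neg at h; nlinarith
      exact ⟨hs, by nlinarith⟩
    · rintro ⟨h1, h2⟩
      exact ⟨by positivity, by nlinarith⟩
  calc ∫⁻ s in Ioo 0 L, φ (a * s)
      = ∫⁻ s in (a * ·) ⁻¹' (Ioo 0 (a * L)), φ (a * s) := by rw [hpre]
    _ = ∫⁻ u, φ u ∂((volume.restrict ((a * ·) ⁻¹' (Ioo 0 (a * L)))).map (a * ·)) :=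
        (lintegral_map hφ (measurable_const_mul a)).symm
    _ = ∫⁻ u, φ u ∂((volume.map (a * ·)).restrict (Ioo 0 (a * L))) := by
        rw [Measure.restrict_map (measurable_const_mul a) measurableSet_Ioo]
    _ = ENNReal.ofReal a⁻¹ * ∫⁻ u in Ioo 0 (a * L), φ u := by
        rw [Real.map_volume_mul_left (ne_of_gt ha), Measure.restrict_smul,
          lintegral_smul_measure, abs_of_nonneg (inv_nonneg.2 ha.le), smul_eq_mul]

end LayerCake

lemma superlevel_subset {A : Set (ℝ×ℝ)} {r : ℝ} (hAr : A ⊆ Metric.closedBall 0 r) {c : ℝ}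
    (hc : 0 < c) : {x | c ≤ slicef A x} ⊆ Icc (-r) r := by
  intro x hx
  obtain ⟨y, hy⟩ := slice_nonempty_of_pos (lt_of_lt_of_le hc hx)
  have := hAr hy
  simp only [Metric.mem_closedBall, dist_zero_right, Prod.norm_def, Real.norm_eq_abs,
    sup_le_iff] at this
  exact abs_le.mp this.1

lemma sum_slice (A B : Set (ℝ×ℝ)) (x y : ℝ) :
    Prod.mk x ⁻¹' A + Prod.mk y ⁻¹' B ⊆ Prod.mk (x+y) ⁻¹' (A+B) := by
  rintro z ⟨z1, hz1, z2, hz2, rfl⟩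
  exact ⟨(x, z1), hz1, (y, z2), hz2, rfl⟩

lemma vol_eq_lintegral_slicef {A : Set (ℝ×ℝ)} {r : ℝ} (hA : MeasurableSet A)
    (hAr : A ⊆ Metric.closedBall 0 r) :
    volume A = ∫⁻ x, ENNReal.ofReal (slicef A x) := by
  rw [show (volume : Measure (ℝ×ℝ)) = (volume : Measure ℝ).prod volume from rfl,
    Measure.prod_apply hA]
  exact lintegral_congr fun x => (ENNReal.ofReal_toReal (slice_vol_ne_top hAr x)).symm

lemma layercake_slicef {A : Set (ℝ×ℝ)} {r : ℝ} (hA : MeasurableSet A)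
    (hAr : A ⊆ Metric.closedBall 0 r) :
    volume A = ∫⁻ s in Ioi (0:ℝ), volume {x | s ≤ slicef A x} := by
  rw [vol_eq_lintegral_slicef hA hAr]
  exact lintegral_eq_lintegral_meas_le volume (ae_of_all _ fun x => slicef_nonneg x)
    ((measurable_measure_prodMk_left hA).ennreal_toReal).aemeasurable

lemma trunc_le (f : ℝ → ℝ) (M : ℝ) (hfM : ∀ x, f x ≤ M) :
    ∫⁻ s in Ioi (0:ℝ), volume {x | s ≤ f x} ≤ ∫⁻ s in Ioo 0 M, volume {x | s ≤ f x} := by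
  have hIci : ∫⁻ s in Ici M, volume {x | s ≤ f x} = 0 := by
    rw [← le_zero_iff]
    have hIoi : ∫⁻ s in Ioi M, volume {x | s ≤ f x} = 0 := by
      rw [setLIntegral_congr_fun measurableSet_Ioi
        (fun s (hs : M < s) => ?_), lintegral_zero]
      have : {x | s ≤ f x} = ∅ :=
        eq_empty_iff_forall_notMem.2 fun x hx => absurd (le_trans hx (hfM x)) (not_le.2 hs)
      rw [this, measure_empty]
    have hsingle : ∫⁻ s in ({M} : Set ℝ), volume {x | s ≤ f x} = 0 := by
      rw [Measure.restrict_eq_zero.mpr Real.volume_singleton, lintegral_zero_measure]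
    have hIci_eq : Ici M = {M} ∪ Ioi M := by
      ext t; simp [le_iff_lt_or_eq, eq_comm, or_comm]
    calc ∫⁻ s in Ici M, volume {x | s ≤ f x}
        = ∫⁻ s in {M} ∪ Ioi M, volume {x | s ≤ f x} := by rw [← hIci_eq]
      _ ≤ (∫⁻ s in ({M} : Set ℝ), volume {x | s ≤ f x})
          + ∫⁻ s in Ioi M, volume {x | s ≤ f x} := lintegral_union_le _ _ _
      _ = 0 := by rw [hIoi, hsingle, add_zero]
  calc ∫⁻ s in Ioi (0:ℝ), volume {x | s ≤ f x}
      ≤ ∫⁻ s in Ioo 0 M ∪ Ici M, volume {x | s ≤ f x} := by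
        apply lintegral_mono_set
        intro s hs
        rcases lt_or_ge s M with h | h
        · exact Or.inl ⟨hs, h⟩
        · exact Or.inr h
    _ ≤ (∫⁻ s in Ioo 0 M, volume {x | s ≤ f x})
        + ∫⁻ s in Ici M, volume {x | s ≤ f x} := lintegral_union_le _ _ _
    _ = ∫⁻ s in Ioo 0 M, volume {x | s ≤ f x} := by rw [hIci, add_zero]

lemma bm_main (A B : Set (ℝ×ℝ)) (hA : IsCompact A) (hcA : Convex ℝ A) (hneA : A.Nonempty)
    (hB : IsCompact B) (hcB : Convex ℝ B) (hneB : B.Nonempty) :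
    (volume A).toReal + (volume B).toReal
      + 2 * Real.sqrt ((volume A).toReal * (volume B).toReal) ≤ (volume (A + B)).toReal := by
  -- bounding ball
  obtain ⟨r₀, hr₀⟩ := (hA.isBounded.union hB.isBounded).subset_closedBall 0
  set r := max r₀ 1 with hrdef
  have hr0 : (0:ℝ) < r := lt_of_lt_of_le one_pos (le_max_right _ _)
  have hsub : A ∪ B ⊆ Metric.closedBall 0 r :=
    hr₀.trans (Metric.closedBall_subset_closedBall (le_max_left _ _))
  have hsubA : A ⊆ Metric.closedBall 0 r := (subset_union_left).trans hsub
  have hsubB : B ⊆ Metric.closedBall 0 r := (subset_union_right).trans hsub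
  have hsubAB : A + B ⊆ Metric.closedBall 0 (r + r) := by
    rintro z ⟨x, hx, y, hy, rfl⟩
    have hx' := mem_closedBall_zero_iff.1 (hsubA hx)
    have hy' := mem_closedBall_zero_iff.1 (hsubB hy)
    exact mem_closedBall_zero_iff.2 ((norm_add_le x y).trans (add_le_add hx' hy'))
  have hABc : IsCompact (A + B) := hA.add hB
  have hAfin : volume A ≠ ⊤ := hA.measure_lt_top.ne
  have hBfin : volume B ≠ ⊤ := hB.measure_lt_top.ne
  have hABfin : volume (A + B) ≠ ⊤ := hABc.measure_lt_top.ne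
  have hAm : MeasurableSet A := hA.measurableSet
  have hBm : MeasurableSet B := hB.measurableSet
  have hABm : MeasurableSet (A + B) := hABc.measurableSet
  -- degenerate cases
  have htrans : ∀ C D : Set (ℝ×ℝ), D.Nonempty → volume C ≤ volume (D + C) := by
    rintro C D ⟨a, ha⟩
    have himg : (a + ·) '' C ⊆ D + C := by
      rintro z ⟨c, hc, rfl⟩; exact ⟨a, ha, c, hc, rfl⟩
    calc volume C = volume ((a + ·) ⁻¹' ((a + ·) '' C)) := by
          rw [preimage_image_eq _ (add_right_injective a)]
      _ = volume ((a + ·) '' C) := measure_preimage_add volume a _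
      _ ≤ volume (D + C) := measure_mono himg
  by_cases hvA : (volume A).toReal = 0
  · have h1 : (volume B).toReal ≤ (volume (A+B)).toReal :=
      ENNReal.toReal_mono hABfin (htrans B A hneA)
    rw [hvA]
    simpa using h1
  by_cases hvB : (volume B).toReal = 0
  · have h2 : volume A ≤ volume (B + A) := htrans A B hneB
    rw [add_comm B A] at h2
    have h1 : (volume A).toReal ≤ (volume (A+B)).toReal := ENNReal.toReal_mono hABfin h2
    rw [hvB]
    simpa [mul_comm] using h1
  -- main case
  set f := slicef A with hf
  set g := slicef B with hg
  set hh := slicef (A + B) with hhh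
  have hbddf : BddAbove (range f) := ⟨2*r, by rintro _ ⟨x, rfl⟩; exact slicef_le hsubA hr0.le x⟩
  have hbddg : BddAbove (range g) := ⟨2*r, by rintro _ ⟨x, rfl⟩; exact slicef_le hsubB hr0.le x⟩
  set M := ⨆ x, f x with hM
  set N := ⨆ x, g x with hN
  have hfM : ∀ x, f x ≤ M := fun x => le_ciSup hbddf x
  have hgN : ∀ x, g x ≤ N := fun x => le_ciSup hbddg x
  have hMpos : 0 < M := by
    by_contra hc
    push_neg at hc
    have hzero : ∀ x, f x = 0 := fun x => le_antisymm ((hfM x).trans hc) (slicef_nonneg x)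
    have : volume A = 0 := by
      rw [vol_eq_lintegral_slicef hAm hsubA]
      simp only [← hf]
      simp [hzero]
    exact hvA (by simp [this])
  have hNpos : 0 < N := by
    by_contra hc
    push_neg at hc
    have hzero : ∀ x, g x = 0 := fun x => le_antisymm ((hgN x).trans hc) (slicef_nonneg x)
    have : volume B = 0 := by
      rw [vol_eq_lintegral_slicef hBm hsubB]
      simp only [← hg]
      simp [hzero]
    exact hvB (by simp [this])
  have hMN : (0:ℝ) < M + N := by linarith
  set c := M / (M + N) with hcdef
  set d := N / (M + N) with hddef
  have hcpos : 0 < c := div_pos hMpos hMN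
  have hdpos : 0 < d := div_pos hNpos hMN
  -- the key pointwise inequality
  have key : ∀ s ∈ Ioo (0:ℝ) (M + N),
      volume {x | c * s ≤ f x} + volume {y | d * s ≤ g y} ≤ volume {z | s ≤ hh z} := by
    rintro s ⟨hs0, hsMN⟩
    have hu0 : 0 < c * s := mul_pos hcpos hs0
    have hv0 : 0 < d * s := mul_pos hdpos hs0
    have huM : c * s < M := by
      rw [hcdef, div_mul_eq_mul_div, div_lt_iff₀ hMN]
      nlinarith
    have hvN : d * s < N := by
      rw [hddef, div_mul_eq_mul_div, div_lt_iff₀ hMN]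
      nlinarith
    set S := {x | c * s ≤ f x} with hSdef
    set T := {y | d * s ≤ g y} with hTdef
    have hScvx : Convex ℝ S := superlevel_convex hsubA hcA hu0
    have hTcvx : Convex ℝ T := superlevel_convex hsubB hcB hv0
    have hSne : S.Nonempty := by
      obtain ⟨x, hx⟩ := exists_lt_of_lt_ciSup huM
      exact ⟨x, hx.le⟩
    have hTne : T.Nonempty := by
      obtain ⟨y, hy⟩ := exists_lt_of_lt_ciSup hvN
      exact ⟨y, hy.le⟩
    have hSbd : Bornology.IsBounded S :=
      (Metric.isBounded_Icc (-r) r).subset (superlevel_subset hsubA hu0)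
    have hTbd : Bornology.IsBounded T :=
      (Metric.isBounded_Icc (-r) r).subset (superlevel_subset hsubB hv0)
    have hST : S + T ⊆ {z | s ≤ hh z} := by
      rintro z ⟨x, hx, y, hy, rfl⟩
      have hsx : (Prod.mk x ⁻¹' A).Nonempty :=
        slice_nonempty_of_pos (lt_of_lt_of_le hu0 hx)
      have hsy : (Prod.mk y ⁻¹' B).Nonempty :=
        slice_nonempty_of_pos (lt_of_lt_of_le hv0 hy)
      have h1 : volume (Prod.mk x ⁻¹' A) + volume (Prod.mk y ⁻¹' B)
          ≤ volume (Prod.mk (x+y) ⁻¹' (A+B)) := by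
        calc volume (Prod.mk x ⁻¹' A) + volume (Prod.mk y ⁻¹' B)
            ≤ volume (Prod.mk x ⁻¹' A + Prod.mk y ⁻¹' B) :=
              vol1d_add _ _ (slice_convex hcA x) hsx (slice_bounded hsubA x)
                (slice_convex hcB y) hsy (slice_bounded hsubB y)
          _ ≤ volume (Prod.mk (x+y) ⁻¹' (A+B)) := measure_mono (sum_slice A B x y)
      have h2 : f x + g y ≤ hh (x + y) := by
        have := ENNReal.toReal_mono (slice_vol_ne_top hsubAB (x+y)) h1
        rwa [ENNReal.toReal_add (slice_vol_ne_top hsubA x) (slice_vol_ne_top hsubB y)] at this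
      have h3 : c * s + d * s = s := by
        rw [hcdef, hddef]
        field_simp
      show s ≤ hh (x + y)
      calc s = c * s + d * s := h3.symm
        _ ≤ f x + g y := add_le_add hx hy
        _ ≤ hh (x + y) := h2
    calc volume S + volume T ≤ volume (S + T) :=
          vol1d_add _ _ hScvx hSne hSbd hTcvx hTne hTbd
      _ ≤ volume {z | s ≤ hh z} := measure_mono hST
  -- integrate
  have hmeasf : Measurable fun s : ℝ => volume {x | c * s ≤ f x} :=
    superlevel_antimeas f hcpos.le
  have hmeasg : Measurable fun s : ℝ => volume {y | d * s ≤ g y} :=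
    superlevel_antimeas g hdpos.le
  have hmeash : Measurable fun s : ℝ => volume {z | s ≤ hh z} := by
    have := superlevel_antimeas hh (zero_le_one (α := ℝ))
    simpa using this
  have hintineq : (∫⁻ s in Ioo (0:ℝ) (M+N), volume {x | c * s ≤ f x})
      + (∫⁻ s in Ioo (0:ℝ) (M+N), volume {y | d * s ≤ g y}) ≤ volume (A + B) := by
    calc (∫⁻ s in Ioo (0:ℝ) (M+N), volume {x | c * s ≤ f x})
        + (∫⁻ s in Ioo (0:ℝ) (M+N), volume {y | d * s ≤ g y})
        = ∫⁻ s in Ioo (0:ℝ) (M+N),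
            (volume {x | c * s ≤ f x} + volume {y | d * s ≤ g y}) := by
          rw [lintegral_add_left hmeasf]
      _ ≤ ∫⁻ s in Ioo (0:ℝ) (M+N), volume {z | s ≤ hh z} :=
          setLIntegral_mono hmeash key
      _ ≤ ∫⁻ s in Ioi (0:ℝ), volume {z | s ≤ hh z} :=
          lintegral_mono_set (fun s hs => hs.1)
      _ = volume (A + B) := (layercake_slicef hABm hsubAB).symm
  -- substitution to recover volumes
  have hsubstA : ENNReal.ofReal c⁻¹ * volume A
      ≤ ∫⁻ s in Ioo (0:ℝ) (M+N), volume {x | c * s ≤ f x} := by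
    have h1 : ∫⁻ s in Ioo (0:ℝ) (M+N), volume {x | c * s ≤ f x}
        = ENNReal.ofReal c⁻¹ * ∫⁻ u in Ioo 0 (c * (M+N)), volume {x | u ≤ f x} := by
      have := subst_lemma (fun u => volume {x | u ≤ f x}) ?_ (M+N) hcpos
      · exact this
      · have := superlevel_antimeas f (zero_le_one (α := ℝ))
        simpa using this
    have h2 : c * (M + N) = M := by rw [hcdef]; field_simp
    rw [h1, h2]
    apply mul_le_mul_right
    calc volume A = ∫⁻ s in Ioi (0:ℝ), volume {x | s ≤ f x} := layercake_slicef hAm hsubA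
      _ ≤ ∫⁻ u in Ioo 0 M, volume {x | u ≤ f x} := trunc_le f M hfM
  have hsubstB : ENNReal.ofReal d⁻¹ * volume B
      ≤ ∫⁻ s in Ioo (0:ℝ) (M+N), volume {y | d * s ≤ g y} := by
    have h1 : ∫⁻ s in Ioo (0:ℝ) (M+N), volume {y | d * s ≤ g y}
        = ENNReal.ofReal d⁻¹ * ∫⁻ u in Ioo 0 (d * (M+N)), volume {y | u ≤ g y} := by
      have := subst_lemma (fun u => volume {y | u ≤ g y}) ?_ (M+N) hdpos
      · exact this
      · have := superlevel_antimeas g (zero_le_one (α := ℝ))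
        simpa using this
    have h2 : d * (M + N) = N := by rw [hddef]; field_simp
    rw [h1, h2]
    apply mul_le_mul_right
    calc volume B = ∫⁻ s in Ioi (0:ℝ), volume {y | s ≤ g y} := layercake_slicef hBm hsubB
      _ ≤ ∫⁻ u in Ioo 0 N, volume {y | u ≤ g y} := trunc_le g N hgN
  have hfinal : ENNReal.ofReal c⁻¹ * volume A + ENNReal.ofReal d⁻¹ * volume B
      ≤ volume (A + B) := le_trans (add_le_add hsubstA hsubstB) hintineq
  -- convert to reals
  set vA := (volume A).toReal with hvAdef
  set vB := (volume B).toReal with hvBdef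
  have hvA0 : 0 ≤ vA := ENNReal.toReal_nonneg
  have hvB0 : 0 ≤ vB := ENNReal.toReal_nonneg
  have hreal : c⁻¹ * vA + d⁻¹ * vB ≤ (volume (A+B)).toReal := by
    have := ENNReal.toReal_mono hABfin hfinal
    rwa [ENNReal.toReal_add (by finiteness) (by finiteness), ENNReal.toReal_mul,
      ENNReal.toReal_mul, ENNReal.toReal_ofReal (inv_nonneg.2 hcpos.le),
      ENNReal.toReal_ofReal (inv_nonneg.2 hdpos.le)] at this
  have hcinv : c⁻¹ = 1 + N / M := by
    rw [hcdef, inv_div, one_add_div hMpos.ne']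
  have hdinv : d⁻¹ = 1 + M / N := by
    rw [hddef, inv_div, one_add_div hNpos.ne', add_comm M N]
  rw [hcinv, hdinv] at hreal
  -- AM-GM
  have hamgm : 2 * Real.sqrt (vA * vB) ≤ N / M * vA + M / N * vB := by
    set p := N / M * vA with hpdef
    set q := M / N * vB with hqdef
    have hp : 0 ≤ p := by positivity
    have hq : 0 ≤ q := by positivity
    have hpq : p * q = vA * vB := by
      rw [hpdef, hqdef]
      field_simp
    have hsq : Real.sqrt (vA * vB) = Real.sqrt p * Real.sqrt q := by
      rw [← hpq, Real.sqrt_mul hp]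
    rw [hsq]
    nlinarith [sq_nonneg (Real.sqrt p - Real.sqrt q), Real.sq_sqrt hp, Real.sq_sqrt hq]
  nlinarith [hreal, hamgm]


lemma latticePolygon_facts {P : Set (ℝ × ℝ)} (hP : IsLatticePolygon P) :
    IsCompact P ∧ Convex ℝ P ∧ P.Nonempty := by
  obtain ⟨F, hFne, rfl⟩ := hP
  refine ⟨Set.Finite.isCompact_convexHull ℝ (F.finite_toSet.image _), convex_convexHull ℝ _, ?_⟩
  obtain ⟨p, hp⟩ := hFne
  exact ⟨toR2 p, subset_convexHull ℝ _ ⟨p, hp, rfl⟩⟩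

/-- Minkowski's inequality for lattice polygons:
`Vol₂(P)·Vol₂(Q) ≤ V(P,Q)²`. -/
theorem stmt_14 (P Q : Set (ℝ × ℝ)) (hP : IsLatticePolygon P)
    (hQ : IsLatticePolygon Q) : nvol P * nvol Q ≤ (mixedVol P Q) ^ 2 := by
  obtain ⟨hPc, hPcv, hPne⟩ := latticePolygon_facts hP
  obtain ⟨hQc, hQcv, hQne⟩ := latticePolygon_facts hQ
  have hbm := bm_main P Q hPc hPcv hPne hQc hQcv hQne
  set vP := (volume P).toReal with hvP
  set vQ := (volume Q).toReal with hvQ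
  set vPQ := (volume (P + Q)).toReal with hvPQ
  set s := Real.sqrt (vP * vQ) with hs
  have hs0 : 0 ≤ s := Real.sqrt_nonneg _
  have hs2 : s ^ 2 = vP * vQ :=
    Real.sq_sqrt (mul_nonneg ENNReal.toReal_nonneg ENNReal.toReal_nonneg)
  have hgoal : (2 * vP) * (2 * vQ) ≤ ((2 * vPQ - 2 * vP - 2 * vQ) / 2) ^ 2 := by
    have h4 : 0 ≤ vPQ - vP - vQ - 2 * s := by linarith
    nlinarith [mul_nonneg h4 h4, mul_nonneg h4 hs0]
  simpa [nvol, mixedVol] using hgoal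
end
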